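/- Let (R, m) be a commutative noetherian local ring and let M be an arbitrary R-module. Then every associated prime of M is attached to the Matlis dual of M, i.e. Ass_R(M) ⊆ Att_R(D(M)). -/

import Mathlib

/-- `attachedPrimes R M` is the set of prime ideals `p` of `R` attached to the `R`-module `M`,
i.e. such that `p` is the annihilator of some quotient of `M`. -/
def attachedPrimes (R : Type*) [CommRing R] (M : Type*) [AddCommGroup M] [Module R M] :
    Set (Ideal R) :=
  {p | p.IsPrime ∧ ∃ U : Submodule R M, p = Module.annihilator R (M ⧸ U)}

/-- The annihilator of a module is invariant under linear equivalence. -/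
theorem annihilator_congr {R M N : Type*} [CommRing R] [AddCommGroup M] [Module R M]
    [AddCommGroup N] [Module R N] (e : M ≃ₗ[R] N) :
    Module.annihilator R M = Module.annihilator R N := by
  ext r
  simp only [Module.mem_annihilator]
  constructor
  · intro h n; rw [← e.apply_symm_apply n, ← map_smul, h, map_zero]
  · intro h m; rw [← e.symm_apply_apply m, ← map_smul, h, map_zero]

/-- over a noetherian local ring, `Ass_R(M) ⊆ Att_R(D(M))`, where
`D(M) = Hom_R(M, E)` is the Matlis dual with respect to an injective hull `E` of `R/m`. -/
theorem stmt0 (R : Type) [CommRing R] [IsNoetherianRing R] [IsLocalRing R]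
    (M : Type) [AddCommGroup M] [Module R M]
    -- `E` is an injective hull of the residue field `R ⧸ m`:
    (E : Type) [AddCommGroup E] [Module R E] (hE : Module.Injective R E)
    (f : (R ⧸ IsLocalRing.maximalIdeal R) →ₗ[R] E) (hf : Function.Injective f)
    (hess : ∀ U : Submodule R E, U ≠ ⊥ → U ⊓ LinearMap.range f ≠ ⊥) :
    associatedPrimes R M ⊆ attachedPrimes R (M →ₗ[R] E) := by
  intro p hpa
  obtain ⟨hp, x, hx⟩ := (isAssociatedPrime_iff).1 hpa
  -- the embedding `R ⧸ p ↪ M`, `r ↦ r • x`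
  have hker : p ≤ LinearMap.ker (LinearMap.toSpanSingleton R M x) := by
    intro r hr
    rw [LinearMap.mem_ker, LinearMap.toSpanSingleton_apply]
    exact (Submodule.mem_bot R).1 (Submodule.mem_colon_singleton.1 (hx ▸ hr))
  set i : (R ⧸ p) →ₗ[R] M := Submodule.liftQ p (LinearMap.toSpanSingleton R M x) hker with hi_def
  have hi : Function.Injective i := by
    rw [← LinearMap.ker_eq_bot]
    apply Submodule.ker_liftQ_eq_bot
    intro r hr
    rw [LinearMap.mem_ker, LinearMap.toSpanSingleton_apply] at hr
    exact hx ▸ Submodule.mem_colon_singleton.2 ((Submodule.mem_bot R).2 hr)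
  -- the dual map `D(i) : D(M) → D(R ⧸ p)` is surjective
  set D : (M →ₗ[R] E) →ₗ[R] ((R ⧸ p) →ₗ[R] E) := LinearMap.lcomp R E i with hD_def
  have hDsurj : Function.Surjective D := by
    intro g
    obtain ⟨h, hh⟩ := hE.out i hi g
    exact ⟨h, LinearMap.ext hh⟩
  refine ⟨hp, LinearMap.ker D, ?_⟩
  rw [annihilator_congr (D.quotKerEquivOfSurjective hDsurj)]
  -- it remains to show `p = Ann (Hom(R ⧸ p, E))`
  ext r
  rw [Module.mem_annihilator]
  constructor
  · -- `p` annihilates `Hom(R ⧸ p, E)`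
    intro hr φ
    refine LinearMap.ext fun y => ?_
    obtain ⟨s, rfl⟩ := Submodule.mkQ_surjective p y
    have h0 : r • (Submodule.mkQ p) s = 0 := by
      rw [← map_smul, Submodule.mkQ_apply, Submodule.Quotient.mk_eq_zero]
      rw [smul_eq_mul]
      exact Ideal.mul_mem_right s p hr
    rw [LinearMap.smul_apply, ← map_smul, h0, map_zero, LinearMap.zero_apply]
  · -- conversely, if `r ∉ p` then `r` does not annihilate `Hom(R ⧸ p, E)`
    intro hr
    by_contra hrp
    -- multiplication by `r` on `R ⧸ p` is injective
    set μ : (R ⧸ p) →ₗ[R] (R ⧸ p) := r • LinearMap.id with hμ_def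
    have hμ : Function.Injective μ := by
      rw [← LinearMap.ker_eq_bot]
      ext y
      simp only [LinearMap.mem_ker, Submodule.mem_bot]
      constructor
      · intro hy
        obtain ⟨s, rfl⟩ := Submodule.mkQ_surjective p y
        have : r • (Submodule.mkQ p) s = 0 := hy
        rw [← map_smul, Submodule.mkQ_apply, Submodule.Quotient.mk_eq_zero, smul_eq_mul] at this
        rw [Submodule.mkQ_apply, Submodule.Quotient.mk_eq_zero]
        exact ((hp.mem_or_mem this).resolve_left hrp)
      · intro hy; rw [hy]; simp [hμ_def]
    -- the projection `R ⧸ p → R ⧸ m`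
    have hpm : p ≤ IsLocalRing.maximalIdeal R := IsLocalRing.le_maximalIdeal hp.ne_top
    set π : (R ⧸ p) →ₗ[R] (R ⧸ IsLocalRing.maximalIdeal R) :=
      Submodule.mapQ p (IsLocalRing.maximalIdeal R) LinearMap.id hpm with hπ_def
    obtain ⟨h, hh⟩ := hE.out μ hμ (f.comp π)
    -- then `r • h = 0` forces `f (π 1) = 0`, a contradiction
    have h0 : h (μ (Submodule.Quotient.mk 1)) = 0 := by
      show h (r • Submodule.Quotient.mk 1) = 0
      rw [map_smul]
      simpa using congrArg (fun φ : (R ⧸ p) →ₗ[R] E => φ (Submodule.Quotient.mk 1)) (hr h)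
    have h0' : f (π (Submodule.Quotient.mk 1)) = 0 := by
      rw [show f (π (Submodule.Quotient.mk 1)) = (f.comp π) (Submodule.Quotient.mk 1) from rfl,
        ← hh]
      exact h0
    have h3 : π (Submodule.Quotient.mk 1) = 0 := hf (by rw [h0', map_zero])
    have h4 : π (Submodule.Quotient.mk (1 : R)) = Submodule.Quotient.mk 1 := by
      rw [hπ_def, Submodule.mapQ_apply]; rfl
    rw [h4, Submodule.Quotient.mk_eq_zero] at h3
    exact (IsLocalRing.maximalIdeal.isMaximal R).ne_top
      (Ideal.eq_top_of_isUnit_mem _ h3 isUnit_one)
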